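/- arXiv:2110.03565 — 4 statements merged into one kernel-verified Lean document; each statement's English description precedes it below -/
import Mathlib

section
/- Let V and H be complex Hilbert spaces, J : V → H an injective continuous linear map, T > 0 and α > 0. For each t ∈ [0,T] let a(t,·,·) : V × V → ℂ be a sesquilinear form. Let P : H → H be a continuous linear map which is idempotent (P ∘ P = P) and self-adjoint (⟨Px, y⟩_H = ⟨x, Py⟩_H for all x, y ∈ H), and let Q : V → V be a continuous linear idempotent with J ∘ Q = P ∘ J. Let u : [0,T] → V be such that J ∘ u is differentiable at every t ∈ [0,T] (as a map into H) and such that for every t ∈ [0,T] and every y ∈ V one has ⟨(J ∘ u)'(t), J y⟩_H = −a(t, Q(u(t)), Q y) − α⟨(I−Q)(u(t)), (I−Q) y⟩_V. If Q(u(0)) = u(0), then Q(u(t)) = u(t) for every t ∈ [0,T]. -/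
open Set

/-- Lemma 3.1 (invariance): the solution of the evolution equation governed by the
truncated form starting in the range of `Q` stays in the range of `Q`. -/
theorem stmt4 {V H : Type*} [NormedAddCommGroup V] [InnerProductSpace ℂ V]
    [NormedAddCommGroup H] [InnerProductSpace ℂ H]
    (J : V →L[ℂ] H) (hJ : Function.Injective J)
    (T α : ℝ) (hT : 0 < T) (hα : 0 < α)
    (a : ℝ → V →ₗ[ℂ] V →ₛₗ[starRingEnd ℂ] ℂ)
    (P : H →L[ℂ] H) (hPidem : ∀ x, P (P x) = P x)
    (hPsa : ∀ x y : H, (inner ℂ (P x) y : ℂ) = inner ℂ x (P y))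
    (Q : V →L[ℂ] V) (hQidem : ∀ x, Q (Q x) = Q x)
    (hJQ : ∀ x, J (Q x) = P (J x))
    (u : ℝ → V) (Ju' : ℝ → H)
    (hderiv : ∀ t ∈ Icc 0 T, HasDerivAt (fun s => J (u s)) (Ju' t) t)
    (heq : ∀ t ∈ Icc 0 T, ∀ y : V,
      (inner ℂ (J y) (Ju' t) : ℂ)
        = -(a t (Q (u t)) (Q y))
          - (α : ℂ) * (inner ℂ (y - Q y) (u t - Q (u t)) : ℂ))
    (h0 : Q (u 0) = u 0) :
    ∀ t ∈ Icc 0 T, Q (u t) = u t := by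
  set w : ℝ → H := fun t => J (u t) - P (J (u t)) with hw
  set w' : ℝ → H := fun t => Ju' t - P (Ju' t) with hw'
  have hwderiv : ∀ t ∈ Icc (0:ℝ) T, HasDerivAt w (w' t) t := by
    intro t ht
    have hPd : HasDerivAt (fun s => P (J (u s))) (P (Ju' t)) t := by
      exact (P.restrictScalars ℝ).hasFDerivAt.comp_hasDerivAt t (hderiv t ht)
    exact (hderiv t ht).sub hPd
  have hwJ : ∀ t, w t = J (u t - Q (u t)) := by
    intro t; simp [hw, map_sub, hJQ]
  -- Q kills y := u t - Q (u t)
  have hQy : ∀ t, Q (u t - Q (u t)) = 0 := by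
    intro t; simp [map_sub, hQidem]
  -- key inner product computation
  have key : ∀ t ∈ Icc (0:ℝ) T,
      (inner ℂ (w t) (w' t) : ℂ)
        = -(α : ℂ) * (inner ℂ (u t - Q (u t)) (u t - Q (u t)) : ℂ) := by
    intro t ht
    have hPw : P (w t) = 0 := by
      simp [hw, map_sub, hPidem]
    have h2 : (inner ℂ (w t) (P (Ju' t)) : ℂ) = 0 := by
      rw [← hPsa, hPw, inner_zero_left]
    have h1 : (inner ℂ (w t) (Ju' t) : ℂ)
        = -(α : ℂ) * (inner ℂ (u t - Q (u t)) (u t - Q (u t)) : ℂ) := by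
      rw [hwJ t, heq t ht (u t - Q (u t)), hQy t]
      simp
    calc (inner ℂ (w t) (w' t) : ℂ)
        = (inner ℂ (w t) (Ju' t) : ℂ) - (inner ℂ (w t) (P (Ju' t)) : ℂ) := by
          simp [hw', inner_sub_right]
      _ = -(α : ℂ) * (inner ℂ (u t - Q (u t)) (u t - Q (u t)) : ℂ) := by
          rw [h1, h2, sub_zero]
  -- real-valued energy
  set g : ℝ → ℝ := fun t => ‖w t‖ ^ 2 with hg
  have hgderiv : ∀ t ∈ Icc (0:ℝ) T,
      HasDerivAt g (-(2 * α) * ‖u t - Q (u t)‖ ^ 2) t := by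
    intro t ht
    have hinner : HasDerivAt (fun s => (inner ℂ (w s) (w s) : ℂ))
        ((inner ℂ (w t) (w' t) : ℂ) + (inner ℂ (w' t) (w t) : ℂ)) t :=
      (hwderiv t ht).inner ℂ (hwderiv t ht)
    have hre : HasDerivAt (fun s => ((inner ℂ (w s) (w s) : ℂ)).re)
        (((inner ℂ (w t) (w' t) : ℂ) + (inner ℂ (w' t) (w t) : ℂ)).re) t := by
      exact Complex.reCLM.hasFDerivAt.comp_hasDerivAt t hinner
    have hge : g = fun s => ((inner ℂ (w s) (w s) : ℂ)).re := by
      funext s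
      rw [hg]
      exact (inner_self_eq_norm_sq (𝕜 := ℂ) (w s)).symm
    rw [hge]
    convert hre using 1
    have h2 : (inner ℂ (w' t) (w t) : ℂ) = starRingEnd ℂ (inner ℂ (w t) (w' t) : ℂ) :=
      (inner_conj_symm _ _).symm
    rw [h2, key t ht, inner_self_eq_norm_sq_to_K]
    simp [Complex.add_re, Complex.mul_re, ← Complex.ofReal_pow]
    ring
  -- g is antitone on [0,T]
  have hcont : ContinuousOn g (Icc 0 T) := fun t ht =>
    ((hgderiv t ht).continuousAt).continuousWithinAt
  have hanti : AntitoneOn g (Icc 0 T) := by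
    apply antitoneOn_of_deriv_nonpos (convex_Icc 0 T) hcont
    · intro t ht
      rw [interior_Icc] at ht
      exact ((hgderiv t (Ioo_subset_Icc_self ht)).differentiableAt).differentiableWithinAt
    · intro t ht
      rw [interior_Icc] at ht
      rw [(hgderiv t (Ioo_subset_Icc_self ht)).deriv]
      have h1 : (0:ℝ) ≤ ‖u t - Q (u t)‖ ^ 2 := sq_nonneg _
      nlinarith [hα.le]
  have hg0 : g 0 = 0 := by
    have hw0 : w 0 = 0 := by
      rw [hwJ 0, h0]
      simp
    simp [hg, hw0]
  intro t ht
  have h0mem : (0:ℝ) ∈ Icc (0:ℝ) T := ⟨le_rfl, hT.le⟩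
  have hle : g t ≤ 0 := hg0 ▸ hanti h0mem ht ht.1
  have hgeq : ‖w t‖ ^ 2 = 0 := le_antisymm hle (sq_nonneg _)
  have hwt : w t = 0 := by
    have := (pow_eq_zero_iff two_ne_zero).mp hgeq
    simpa using this
  have hJ0 : J (u t - Q (u t)) = J 0 := by
    rw [← hwJ t, hwt, map_zero]
  have := sub_eq_zero.mp (by simpa using hJ hJ0)
  exact this.symm
end

section
/- Let V and H be complex Hilbert spaces, J : V → H a continuous linear map, s ≤ T real numbers and M > 0. For each t ∈ [s,T] let a(t,·,·) : V × V → ℂ be a sesquilinear form with |a(t,x,y)| ≤ M‖x‖_V‖y‖_V for all x, y ∈ V and Re a(t,x,x) ≥ 0 for all x ∈ V. Let Q : V → V be a continuous linear idempotent. Let u, u_m : [s,T] → V be such that J ∘ u and J ∘ u_m are differentiable at every t ∈ [s,T] (as maps into H), Q(u_m(t)) = u_m(t) for every t ∈ [s,T], and such that for every t ∈ [s,T] and every y ∈ V one has ⟨(J ∘ u)'(t), J y⟩_H = −a(t, u(t), y) and ⟨(J ∘ u_m)'(t), J y⟩_H = −a(t, u_m(t), Q y). Then for every t ∈ [s,T],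 the derivative at t of the function t ↦ ½‖J(u_m(t)) − J(u(t))‖_H² is less than or equal to M ‖u_m(t)‖_V · ‖u(t) − Q(u(t))‖_V. -/
open Set

/-- Inequality (bella) in Lemma 3.2: the derivative of `½‖J u_m(t) - J u(t)‖²` is bounded
by `M‖u_m(t)‖_V ‖(I-Q)u(t)‖_V`. -/
theorem stmt5 {V H : Type*} [NormedAddCommGroup V] [InnerProductSpace ℂ V]
    [NormedAddCommGroup H] [InnerProductSpace ℂ H]
    (J : V →L[ℂ] H) (s T M : ℝ) (hsT : s ≤ T) (hM : 0 < M)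
    (a : ℝ → V →ₗ[ℂ] V →ₛₗ[starRingEnd ℂ] ℂ)
    (hbound : ∀ t ∈ Icc s T, ∀ x y : V, ‖a t x y‖ ≤ M * ‖x‖ * ‖y‖)
    (haccr : ∀ t ∈ Icc s T, ∀ x : V, 0 ≤ (a t x x).re)
    (Q : V →L[ℂ] V) (hQ : ∀ x, Q (Q x) = Q x)
    (u um : ℝ → V) (Ju' Jum' : ℝ → H)
    (hd1 : ∀ t ∈ Icc s T, HasDerivAt (fun r => J (u r)) (Ju' t) t)
    (hd2 : ∀ t ∈ Icc s T, HasDerivAt (fun r => J (um r)) (Jum' t) t)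
    (hum : ∀ t ∈ Icc s T, Q (um t) = um t)
    (he1 : ∀ t ∈ Icc s T, ∀ y : V, (inner ℂ (J y) (Ju' t) : ℂ) = -(a t (u t) y))
    (he2 : ∀ t ∈ Icc s T, ∀ y : V, (inner ℂ (J y) (Jum' t) : ℂ) = -(a t (um t) (Q y))) :
    ∀ t ∈ Icc s T, ∃ d : ℝ,
      HasDerivAt (fun r => (1 / 2 : ℝ) * ‖J (um r) - J (u r)‖ ^ 2) d t ∧
      d ≤ M * ‖um t‖ * ‖u t - Q (u t)‖ := by
  intro t ht
  set g' : H := Jum' t - Ju' t with hg'def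
  have hg : HasDerivAt (fun r => J (um r) - J (u r)) g' t := (hd2 t ht).sub (hd1 t ht)
  have hinner : HasDerivAt (fun r => (inner ℂ (J (um r) - J (u r)) (J (um r) - J (u r)) : ℂ))
      ((inner ℂ (J (um t) - J (u t)) g' : ℂ) + inner ℂ g' (J (um t) - J (u t))) t := hg.inner ℂ hg
  refine ⟨(inner ℂ (J (um t) - J (u t)) g' : ℂ).re, ?_, ?_⟩
  · have h2 : HasDerivAt (fun r => ((inner ℂ (J (um r) - J (u r)) (J (um r) - J (u r)) : ℂ)).re)
        (((inner ℂ (J (um t) - J (u t)) g' : ℂ) + inner ℂ g' (J (um t) - J (u t))).re) t :=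
      Complex.reCLM.hasFDerivAt.comp_hasDerivAt t hinner
    have h3 := h2.const_mul (1/2 : ℝ)
    have heq : ∀ r : ℝ, (1/2 : ℝ) * ((inner ℂ (J (um r) - J (u r)) (J (um r) - J (u r)) : ℂ)).re
        = (1 / 2 : ℝ) * ‖J (um r) - J (u r)‖ ^ 2 := by
      intro r
      rw [← @inner_self_eq_norm_sq ℂ]; rfl
    have hdval : (1/2 : ℝ) * (((inner ℂ (J (um t) - J (u t)) g' : ℂ)
        + inner ℂ g' (J (um t) - J (u t))).re)
        = (inner ℂ (J (um t) - J (u t)) g' : ℂ).re := by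
      have hsym : (inner ℂ g' (J (um t) - J (u t)) : ℂ).re
          = (inner ℂ (J (um t) - J (u t)) g' : ℂ).re := by
        rw [← inner_conj_symm, Complex.conj_re]
      rw [Complex.add_re, hsym]; ring
    rw [← hdval]
    exact (funext heq ▸ h3 :)
  · set w := um t - u t with hw
    have hJw : J (um t) - J (u t) = J w := (map_sub J _ _).symm
    have hQw : Q w = w + (u t - Q (u t)) := by
      rw [hw, map_sub, hum t ht]; abel
    have hval : (inner ℂ (J w) g' : ℂ) = -(a t w w) - a t (um t) (u t - Q (u t)) := by
      rw [hg'def, inner_sub_right, he2 t ht w, he1 t ht w, hQw]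
      simp only [map_add, map_sub, LinearMap.sub_apply, hw]
      ring
    rw [hJw, hval]
    have h1 : 0 ≤ (a t w w).re := haccr t ht w
    have h2 : -((a t (um t)) (u t - Q (u t))).re ≤ M * ‖um t‖ * ‖u t - Q (u t)‖ := by
      calc -((a t (um t)) (u t - Q (u t))).re ≤ |((a t (um t)) (u t - Q (u t))).re| :=
            neg_le_abs _
        _ ≤ ‖(a t (um t)) (u t - Q (u t))‖ := by
            exact Complex.abs_re_le_norm _
        _ ≤ M * ‖um t‖ * ‖u t - Q (u t)‖ := hbound t ht _ _
    have : (-(a t w w) - a t (um t) (u t - Q (u t))).re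
        = -(a t w w).re - ((a t (um t)) (u t - Q (u t))).re := by
      rfl
    rw [this]
    linarith [h1, h2]
end

section
/- Let H be a separable complex Hilbert space and T > 0. Let f : [0,T] × H → H satisfy: (F1) for each x ∈ H the map t ↦ f(t,x) is measurable; (F2) for each t ∈ [0,T] the map f(t,·) is demicontinuous, i.e. whenever x_n → x strongly in H, f(t,x_n) converges weakly to f(t,x); (F3) there exist a > 0 and a nonnegative b ∈ L²([0,T],ℝ) such that ‖f(t,x)‖ ≤ a‖x‖ + b(t) for all (t,x) ∈ [0,T] × H. Then for every u ∈ L²([0,T],H), the function t ↦ f(t,u(t)) is almost everywhere equal to a strongly measurable function and belongs to L²([0,T],H), with ‖f(·,u(·))‖_{L²([0,T],H)} ≤ a‖u‖_{L²([0,T],H)} + ‖b‖_{L²([0,T],ℝ)}. In particular the superposition operator N_f(u)(t) := f(t,u(t)) maps bounded subsets of L²([0,T],H) into bounded subsets of L²([0,T],H). -/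
open MeasureTheory Set Filter
open scoped ENNReal Topology

/-- Pettis measurability in a separable Hilbert space: a weakly measurable function is
measurable. -/
lemma pettis_meas {H : Type*} [NormedAddCommGroup H] [InnerProductSpace ℂ H] [CompleteSpace H]
    [TopologicalSpace.SeparableSpace H] [MeasurableSpace H] [BorelSpace H]
    {g : ℝ → H} (h : ∀ y : H, Measurable fun t => (inner ℂ y (g t) : ℂ)) :
    Measurable g := by
  obtain ⟨D, hD⟩ := TopologicalSpace.exists_dense_seq H
  set φ : H → (ℕ → ℂ) := fun x n => (inner ℂ (D n) x : ℂ) with hφ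
  have hφc : Continuous φ :=
    continuous_pi fun n =>
      (continuous_const.inner continuous_id : Continuous fun x : H => (inner ℂ (D n) x : ℂ))
  have hφi : Function.Injective φ := by
    intro x y hxy
    have hz : ∀ z : H, (inner ℂ z (x - y) : ℂ) = 0 := by
      have hcl : IsClosed {z : H | (inner ℂ z (x - y) : ℂ) = 0} :=
        isClosed_eq (Continuous.inner continuous_id continuous_const) continuous_const
      have hsub : range D ⊆ {z : H | (inner ℂ z (x - y) : ℂ) = 0} := by
        rintro _ ⟨n, rfl⟩
        have := congrFun hxy n
        simp only [hφ] at this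
        simp [inner_sub_right, this]
      intro z
      exact hcl.closure_subset_iff.mpr hsub (hD z)
    have : x - y = 0 := inner_self_eq_zero.mp (hz (x - y))
    exact sub_eq_zero.mp this
  have he : MeasurableEmbedding φ := hφc.measurableEmbedding hφi
  exact he.measurable_comp_iff.mp (measurable_pi_lambda _ fun n => h (D n))

/-- Lemma 4.2 (well-definedness and boundedness): the superposition operator of a map
measurable in `t`, demicontinuous in `x` and of sublinear growth maps `L²([0,T],H)`
into itself with the natural norm bound, and maps bounded sets into bounded sets. -/
theorem stmt6 {H : Type*} [NormedAddCommGroup H] [InnerProductSpace ℂ H] [CompleteSpace H]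
    [TopologicalSpace.SeparableSpace H] [MeasurableSpace H] [BorelSpace H]
    (T : ℝ) (hT : 0 < T)
    (f : ℝ → H → H)
    (hF1 : ∀ x : H, Measurable (fun t => f t x))
    (hF2 : ∀ t ∈ Icc (0 : ℝ) T, ∀ (x : ℕ → H) (x₀ : H),
      Tendsto x atTop (𝓝 x₀) →
      ∀ y : H, Tendsto (fun n => (inner ℂ y (f t (x n)) : ℂ)) atTop (𝓝 (inner ℂ y (f t x₀))))
    (a : ℝ) (ha : 0 < a) (b : ℝ → ℝ) (hb0 : ∀ t, 0 ≤ b t)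
    (hb : MemLp b 2 (volume.restrict (Icc 0 T)))
    (hgrowth : ∀ t ∈ Icc (0 : ℝ) T, ∀ x : H, ‖f t x‖ ≤ a * ‖x‖ + b t) :
    (∀ u : ℝ → H, MemLp u 2 (volume.restrict (Icc 0 T)) →
      MemLp (fun t => f t (u t)) 2 (volume.restrict (Icc 0 T)) ∧
      eLpNorm (fun t => f t (u t)) 2 (volume.restrict (Icc 0 T))
        ≤ ENNReal.ofReal a * eLpNorm u 2 (volume.restrict (Icc 0 T))
          + eLpNorm b 2 (volume.restrict (Icc 0 T))) ∧
    (∀ R : ℝ≥0∞, R < ⊤ → ∃ R' : ℝ≥0∞, R' < ⊤ ∧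
      ∀ u : ℝ → H, MemLp u 2 (volume.restrict (Icc 0 T)) →
        eLpNorm u 2 (volume.restrict (Icc 0 T)) ≤ R →
        eLpNorm (fun t => f t (u t)) 2 (volume.restrict (Icc 0 T)) ≤ R') := by
  haveI : SecondCountableTopology H := UniformSpace.secondCountable_of_separable H
  set μ := volume.restrict (Icc (0 : ℝ) T) with hμ
  have key : ∀ u : ℝ → H, MemLp u 2 μ →
      MemLp (fun t => f t (u t)) 2 μ ∧
      eLpNorm (fun t => f t (u t)) 2 μ
        ≤ ENNReal.ofReal a * eLpNorm u 2 μ + eLpNorm b 2 μ := by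
    intro u hu
    obtain ⟨u', hu'sm, huu'⟩ := hu.1
    set f' : ℝ → H → H := fun t x => if t ∈ Icc (0 : ℝ) T then f t x else 0 with hf'
    have hf'meas : ∀ x : H, Measurable fun t => f' t x := by
      intro x
      have : (fun t => f' t x) = (Icc (0 : ℝ) T).indicator (fun t => f t x) := by
        ext t
        rw [Set.indicator_apply]
      rw [this]
      exact (hF1 x).indicator measurableSet_Icc
    have hweak : ∀ y : H, Measurable fun t => (inner ℂ y (f' t (u' t)) : ℂ) := by
      intro y
      refine measurable_of_tendsto_metrizable
        (f := fun n t => (inner ℂ y (f' t (hu'sm.approx n t)) : ℂ)) (fun n => ?_) ?_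
      · exact Measurable.inner measurable_const ((hu'sm.approx n).measurable_bind
          (fun x t => f' t x) (fun x => hf'meas x))
      · rw [tendsto_pi_nhds]
        intro t
        by_cases ht : t ∈ Icc (0 : ℝ) T
        · simp only [f', if_pos ht]
          exact hF2 t ht (fun n => hu'sm.approx n t) (u' t) (hu'sm.tendsto_approx t) y
        · simp only [f', if_neg ht]
          exact tendsto_const_nhds
    have hmeas : Measurable fun t => f' t (u' t) := pettis_meas hweak
    have hae : (fun t => f t (u t)) =ᵐ[μ] fun t => f' t (u' t) := by
      filter_upwards [huu', ae_restrict_mem measurableSet_Icc] with t h1 h2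
      simp only [f']
      rw [h1, if_pos h2]
    have hasm : AEStronglyMeasurable (fun t => f t (u t)) μ :=
      hmeas.stronglyMeasurable.aestronglyMeasurable.congr hae.symm
    have hmaj : MemLp (fun t => a * ‖u t‖ + b t) 2 μ := (hu.norm.const_mul a).add hb
    have hbd : ∀ᵐ t ∂μ, ‖f t (u t)‖ ≤ ‖a * ‖u t‖ + b t‖ := by
      filter_upwards [ae_restrict_mem measurableSet_Icc] with t ht
      have h1 := hgrowth t ht (u t)
      have h2 : 0 ≤ a * ‖u t‖ + b t :=
        add_nonneg (mul_nonneg ha.le (norm_nonneg _)) (hb0 t)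
      rwa [Real.norm_of_nonneg h2]
    refine ⟨hmaj.of_le hasm hbd, ?_⟩
    calc eLpNorm (fun t => f t (u t)) 2 μ
        ≤ eLpNorm (fun t => a * ‖u t‖ + b t) 2 μ := eLpNorm_mono_ae hbd
      _ ≤ eLpNorm (fun t => a * ‖u t‖) 2 μ + eLpNorm b 2 μ :=
          eLpNorm_add_le ((hu.norm.const_mul a).1) hb.1 one_le_two
      _ = ENNReal.ofReal a * eLpNorm u 2 μ + eLpNorm b 2 μ := by
          congr 1
          have h3 : (fun t => a * ‖u t‖) = a • (fun t => ‖u t‖) := rfl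
          rw [h3, eLpNorm_const_smul, eLpNorm_norm]
          congr 1
          exact Real.enorm_eq_ofReal ha.le
  refine ⟨key, ?_⟩
  intro R hR
  refine ⟨ENNReal.ofReal a * R + eLpNorm b 2 μ, ?_, ?_⟩
  · exact ENNReal.add_lt_top.mpr
      ⟨ENNReal.mul_lt_top ENNReal.ofReal_lt_top hR, hb.2⟩
  · intro u hu huR
    calc eLpNorm (fun t => f t (u t)) 2 μ
        ≤ ENNReal.ofReal a * eLpNorm u 2 μ + eLpNorm b 2 μ := (key u hu).2
      _ ≤ ENNReal.ofReal a * R + eLpNorm b 2 μ := by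
          gcongr
end

section
/- Let H be a separable complex Hilbert space and T > 0. Let f : [0,T] × H → H satisfy: (F1) for each x ∈ H the map t ↦ f(t,x) is measurable; (F2) for each t ∈ [0,T] the map f(t,·) is demicontinuous, i.e. whenever x_n → x strongly in H, f(t,x_n) converges weakly to f(t,x); (F3) there exist a > 0 and a nonnegative b ∈ L²([0,T],ℝ) such that ‖f(t,x)‖ ≤ a‖x‖ + b(t) for all (t,x) ∈ [0,T] × H. Then the superposition operator N_f : L²([0,T],H) → L²([0,T],H), N_f(u)(t) := f(t,u(t)), is demicontinuous: if u_n → u strongly in L²([0,T],H), then N_f(u_n) converges weakly to N_f(u) in L²([0,T],H), i.e. for every v ∈ L²([0,T],H) one has ∫₀ᵀ ⟨f(t,u_n(t)), v(t)⟩_H dt → ∫₀ᵀ ⟨f(t,u(t)), v(t)⟩_H dt. -/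
open MeasureTheory Set Filter
open scoped ENNReal Topology

section Aux

variable {H : Type*} [NormedAddCommGroup H] [InnerProductSpace ℂ H]
  [TopologicalSpace.SeparableSpace H] [MeasurableSpace H] [BorelSpace H]

/-- Scalar measurability for simple second arguments. -/
lemma stmt7_simple_inner {f : ℝ → H → H}
    (hF1 : ∀ x : H, Measurable (fun t => f t x))
    {v : ℝ → H} (hv : Measurable v) (s : SimpleFunc ℝ H) :
    Measurable (fun t => (inner ℂ (v t) (f t (s t)) : ℂ)) := by
  haveI : SecondCountableTopology H := UniformSpace.secondCountable_of_separable H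
  have heq : (fun t => (inner ℂ (v t) (f t (s t)) : ℂ))
      = fun t => ∑ c ∈ s.range, (s ⁻¹' {c}).indicator
          (fun t => (inner ℂ (v t) (f t c) : ℂ)) t := by
    funext t
    rw [Finset.sum_eq_single_of_mem (s t) (s.mem_range_self t)]
    · rw [Set.indicator_of_mem (by simp : t ∈ s ⁻¹' {s t})]
    · intro c hc hne
      exact Set.indicator_of_notMem (by simpa using fun h => hne h.symm) _
  rw [heq]
  exact Finset.measurable_sum _ fun c _ =>
    (Measurable.inner hv (hF1 c)).indicator (s.measurableSet_fiber c)

/-- Scalar a.e. measurability of `t ↦ ⟪v t, f t (w t)⟫`. -/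
lemma stmt7_meas {T : ℝ} {f : ℝ → H → H}
    (hF1 : ∀ x : H, Measurable (fun t => f t x))
    (hF2 : ∀ t ∈ Icc (0 : ℝ) T, ∀ (x : ℕ → H) (x₀ : H),
      Tendsto x atTop (𝓝 x₀) →
      ∀ y : H, Tendsto (fun n => (inner ℂ y (f t (x n)) : ℂ)) atTop (𝓝 (inner ℂ y (f t x₀))))
    {v w : ℝ → H} (hv : AEStronglyMeasurable v (volume.restrict (Icc 0 T)))
    (hw : AEStronglyMeasurable w (volume.restrict (Icc 0 T))) :
    AEStronglyMeasurable (fun t => (inner ℂ (v t) (f t (w t)) : ℂ))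
      (volume.restrict (Icc 0 T)) := by
  obtain ⟨v', hv', hvv'⟩ := hv
  obtain ⟨w', hw', hww'⟩ := hw
  have key : AEStronglyMeasurable (fun t => (inner ℂ (v' t) (f t (w' t)) : ℂ))
      (volume.restrict (Icc 0 T)) := by
    refine aestronglyMeasurable_of_tendsto_ae (f := fun k t =>
      (inner ℂ (v' t) (f t (hw'.approx k t)) : ℂ)) atTop
      (fun k => (stmt7_simple_inner hF1 hv'.measurable (hw'.approx k)).aestronglyMeasurable) ?_
    filter_upwards [ae_restrict_mem measurableSet_Icc] with t ht
    exact hF2 t ht (fun k => hw'.approx k t) (w' t) (hw'.tendsto_approx t) (v' t)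
  refine key.congr ?_
  filter_upwards [hvv', hww'] with t h1 h2
  rw [← h1, ← h2]

end Aux

/-- Lemma 4.2 (demicontinuity): if `u_n → u` strongly in `L²([0,T],H)` then
`N_f(u_n) ⇀ N_f(u)` weakly in `L²([0,T],H)`. -/
theorem stmt7 {H : Type*} [NormedAddCommGroup H] [InnerProductSpace ℂ H] [CompleteSpace H]
    [TopologicalSpace.SeparableSpace H] [MeasurableSpace H] [BorelSpace H]
    (T : ℝ) (hT : 0 < T)
    (f : ℝ → H → H)
    (hF1 : ∀ x : H, Measurable (fun t => f t x))
    (hF2 : ∀ t ∈ Icc (0 : ℝ) T, ∀ (x : ℕ → H) (x₀ : H),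
      Tendsto x atTop (𝓝 x₀) →
      ∀ y : H, Tendsto (fun n => (inner ℂ y (f t (x n)) : ℂ)) atTop (𝓝 (inner ℂ y (f t x₀))))
    (a : ℝ) (ha : 0 < a) (b : ℝ → ℝ) (hb0 : ∀ t, 0 ≤ b t)
    (hb : MemLp b 2 (volume.restrict (Icc 0 T)))
    (hgrowth : ∀ t ∈ Icc (0 : ℝ) T, ∀ x : H, ‖f t x‖ ≤ a * ‖x‖ + b t) :
    ∀ (un : ℕ → ℝ → H) (u : ℝ → H),
      (∀ n, MemLp (un n) 2 (volume.restrict (Icc 0 T))) →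
      MemLp u 2 (volume.restrict (Icc 0 T)) →
      Tendsto (fun n => eLpNorm (fun t => un n t - u t) 2 (volume.restrict (Icc 0 T)))
        atTop (𝓝 0) →
      ∀ v : ℝ → H, MemLp v 2 (volume.restrict (Icc 0 T)) →
        Tendsto (fun n => ∫ t in Icc 0 T, (inner ℂ (v t) (f t (un n t)) : ℂ)) atTop
          (𝓝 (∫ t in Icc 0 T, (inner ℂ (v t) (f t (u t)) : ℂ))) := by
  intro un u hun hu htend v hv
  set μ : Measure ℝ := volume.restrict (Icc 0 T) with hμdef
  apply Filter.tendsto_of_subseq_tendsto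
  intro ns hns
  -- convergence in L² along the subsequence
  have h2 : Tendsto (fun n => eLpNorm (un (ns n) - u) 2 μ) atTop (𝓝 0) := htend.comp hns
  have htm : TendstoInMeasure μ (fun n => un (ns n)) atTop u :=
    tendstoInMeasure_of_tendsto_eLpNorm (p := 2) two_ne_zero
      (fun n => (hun (ns n)).1) hu.1 h2
  obtain ⟨ms, hms, hae⟩ := htm.exists_seq_tendsto_ae
  -- extract a rapidly converging further subsequence
  have hev : ∀ k : ℕ, ∀ᶠ j in atTop,
      eLpNorm (un (ns (ms j)) - u) 2 μ ≤ (2 : ℝ≥0∞)⁻¹ ^ k := by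
    intro k
    have h3 : Tendsto (fun j => eLpNorm (un (ns (ms j)) - u) 2 μ) atTop (𝓝 0) :=
      h2.comp hms.tendsto_atTop
    have hpos : (0 : ℝ≥0∞) < 2⁻¹ ^ k :=
      ENNReal.pow_pos (ENNReal.inv_pos.mpr ENNReal.ofNat_ne_top) k
    exact h3.eventually (ge_mem_nhds hpos)
  obtain ⟨φ, hφ, hφle⟩ := Filter.extraction_forall_of_eventually hev
  set w : ℕ → ℝ → H := fun k => un (ns (ms (φ k))) with hwdef
  have hwm : ∀ k, AEStronglyMeasurable (w k) μ := fun k => (hun _).1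
  -- the ENNReal-valued "increments"
  set e : ℕ → ℝ → ℝ≥0∞ := fun k t => (‖w k t - u t‖₊ : ℝ≥0∞) with hedef
  have hem : ∀ k, AEMeasurable (e k) μ := fun k => ((hwm k).sub hu.1).enorm
  have hek : ∀ k, (∫⁻ t, e k t ^ (2:ℝ) ∂μ) ^ (1/2:ℝ) ≤ (2 : ℝ≥0∞)⁻¹ ^ k := by
    intro k
    have : eLpNorm (w k - u) 2 μ = (∫⁻ t, e k t ^ (2:ℝ) ∂μ) ^ (1/2:ℝ) := by
      rw [eLpNorm_eq_lintegral_rpow_enorm_toReal two_ne_zero ENNReal.ofNat_ne_top]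
      norm_num [hedef]
      rfl
    rw [← this]
    exact hφle k
  set C : ℝ≥0∞ := ∑' k : ℕ, (2 : ℝ≥0∞)⁻¹ ^ k with hCdef
  have hC : C ≠ ∞ := by
    rw [hCdef, ENNReal.tsum_geometric]
    simp [ENNReal.sub_half]
  -- Minkowski for partial sums
  have key : ∀ n, (∫⁻ t, (∑ k ∈ Finset.range n, e k t) ^ (2:ℝ) ∂μ) ^ (1/2:ℝ) ≤ C := by
    intro n
    have : (∫⁻ t, (∑ k ∈ Finset.range n, e k t) ^ (2:ℝ) ∂μ) ^ (1/2:ℝ) ≤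
        ∑ k ∈ Finset.range n, (∫⁻ t, e k t ^ (2:ℝ) ∂μ) ^ (1/2:ℝ) := by
      induction n with
      | zero => simp [ENNReal.zero_rpow_of_pos]
      | succ n ih =>
        simp only [Finset.sum_range_succ]
        refine le_trans ?_ (add_le_add_left ih _)
        refine le_trans (le_of_eq ?_) (ENNReal.lintegral_Lp_add_le
          (Finset.aemeasurable_fun_sum _ fun k _ => hem k) (hem n) one_le_two)
        rfl
    refine this.trans ?_
    refine le_trans (Finset.sum_le_sum fun k _ => hek k) ?_
    exact Summable.sum_le_tsum _ (fun k _ => by simp) ENNReal.summable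
  have key2 : ∀ n, (∫⁻ t, (∑ k ∈ Finset.range n, e k t) ^ (2:ℝ) ∂μ) ≤ C ^ (2:ℝ) := by
    intro n
    have h := ENNReal.rpow_le_rpow (key n) (by norm_num : (0:ℝ) ≤ 2)
    rwa [← ENNReal.rpow_mul, one_div, inv_mul_cancel₀ (by norm_num : (2:ℝ) ≠ 0),
      ENNReal.rpow_one] at h
  -- pass to the tsum via liminf
  set D : ℝ → ℝ≥0∞ := fun t => ∑' k, e k t with hDdef
  have hDm : AEMeasurable D μ := AEMeasurable.ennreal_tsum hem
  have hDint : (∫⁻ t, D t ^ (2:ℝ) ∂μ) ≤ C ^ (2:ℝ) := by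
    have h_tsum : ∀ t, D t = atTop.liminf fun n => ∑ k ∈ Finset.range n, e k t := by
      intro t; exact ENNReal.tsum_eq_liminf_sum_nat
    have h_liminf_pow : (∫⁻ t, D t ^ (2:ℝ) ∂μ) =
        ∫⁻ t, atTop.liminf (fun n => (∑ k ∈ Finset.range n, e k t) ^ (2:ℝ)) ∂μ := by
      refine lintegral_congr fun t => ?_
      rw [h_tsum t]
      have h_rpow_mono := ENNReal.strictMono_rpow_of_pos (show (0:ℝ) < 2 by norm_num)
      have h_rpow_surj := (ENNReal.rpow_left_bijective (by norm_num : (2:ℝ) ≠ 0)).2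
      refine (h_rpow_mono.orderIsoOfSurjective _ h_rpow_surj).liminf_apply ?_ ?_ ?_ ?_
      all_goals isBoundedDefault
    rw [h_liminf_pow]
    refine (lintegral_liminf_le' fun n =>
      (Finset.aemeasurable_fun_sum _ fun k _ => hem k).pow_const _).trans ?_
    exact liminf_le_of_frequently_le' (Frequently.of_forall key2)
  have hDfin : ∀ᵐ t ∂μ, D t < ∞ := by
    have h1 : ∀ᵐ t ∂μ, D t ^ (2:ℝ) < ∞ := by
      refine ae_lt_top' (hDm.pow_const _) ?_
      exact ne_top_of_le_ne_top (ENNReal.rpow_ne_top_of_nonneg (by norm_num) hC) hDint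
    filter_upwards [h1] with t ht
    by_contra h
    rw [not_lt, top_le_iff] at h
    rw [h, ENNReal.top_rpow_of_pos (by norm_num)] at ht
    exact (lt_irrefl _ ht)
  -- the dominating function
  set g : ℝ → ℝ := fun t => ‖u t‖ + (D t).toReal with hgdef
  have hg2 : MemLp g 2 μ := by
    refine MemLp.add hu.norm ?_
    refine ⟨(hDm.ennreal_toReal).aestronglyMeasurable, ?_⟩
    rw [eLpNorm_eq_lintegral_rpow_enorm_toReal two_ne_zero ENNReal.ofNat_ne_top]
    have hle : ∀ t, (‖(D t).toReal‖₊ : ℝ≥0∞) ≤ D t := by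
      intro t
      change ‖(D t).toReal‖ₑ ≤ D t
      rw [Real.enorm_eq_ofReal ENNReal.toReal_nonneg]
      exact ENNReal.ofReal_toReal_le
    calc (∫⁻ t, (‖(D t).toReal‖₊ : ℝ≥0∞) ^ (2:ℝ≥0∞).toReal ∂μ) ^ (1/(2:ℝ≥0∞).toReal)
        ≤ (∫⁻ t, D t ^ (2:ℝ) ∂μ) ^ (1/2:ℝ) := by
          rw [ENNReal.toReal_ofNat]
          exact ENNReal.rpow_le_rpow (lintegral_mono fun t =>
            ENNReal.rpow_le_rpow (hle t) (by norm_num)) (by norm_num)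
      _ ≤ (C ^ (2:ℝ)) ^ (1/2:ℝ) := ENNReal.rpow_le_rpow hDint (by norm_num)
      _ < ∞ := by
          refine ENNReal.rpow_lt_top_of_nonneg (by norm_num) ?_
          exact ENNReal.rpow_ne_top_of_nonneg (by norm_num) hC
  have hdom : ∀ k, ∀ᵐ t ∂μ, ‖w k t‖ ≤ g t := by
    intro k
    filter_upwards [hDfin] with t ht
    have h1 : ‖w k t‖ ≤ ‖u t‖ + ‖w k t - u t‖ := by
      calc ‖w k t‖ = ‖u t + (w k t - u t)‖ := by rw [add_sub_cancel]
        _ ≤ ‖u t‖ + ‖w k t - u t‖ := norm_add_le _ _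
    refine h1.trans (add_le_add_right ?_ _)
    have h2 : e k t ≤ D t := ENNReal.le_tsum k
    have h3 := ENNReal.toReal_mono ht.ne h2
    rwa [hedef, ENNReal.coe_toReal, coe_nnnorm] at h3
  -- dominated convergence
  set bound : ℝ → ℝ := fun t => ‖v t‖ * (a * g t + b t) with hbounddef
  have hboundInt : Integrable bound μ := by
    have hmem : MemLp ((fun t => ‖v t‖) • (fun t => a * g t + b t)) 1 μ := by
      exact MemLp.smul (r := 1) ((hg2.const_mul a).add hb) hv.norm
    exact memLp_one_iff_integrable.mp hmem
  have hFmeas : ∀ k, AEStronglyMeasurable (fun t => (inner ℂ (v t) (f t (w k t)) : ℂ)) μ :=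
    fun k => stmt7_meas hF1 hF2 hv.1 (hwm k)
  have hbound : ∀ k, ∀ᵐ t ∂μ, ‖(inner ℂ (v t) (f t (w k t)) : ℂ)‖ ≤ bound t := by
    intro k
    filter_upwards [ae_restrict_mem measurableSet_Icc, hdom k] with t ht hle
    calc ‖(inner ℂ (v t) (f t (w k t)) : ℂ)‖ ≤ ‖v t‖ * ‖f t (w k t)‖ := norm_inner_le_norm _ _
      _ ≤ ‖v t‖ * (a * ‖w k t‖ + b t) :=
          mul_le_mul_of_nonneg_left (hgrowth t ht _) (norm_nonneg _)
      _ ≤ ‖v t‖ * (a * g t + b t) := by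
          refine mul_le_mul_of_nonneg_left ?_ (norm_nonneg _)
          exact add_le_add_left (mul_le_mul_of_nonneg_left hle ha.le) _
  have hlim : ∀ᵐ t ∂μ, Tendsto (fun k => (inner ℂ (v t) (f t (w k t)) : ℂ)) atTop
      (𝓝 (inner ℂ (v t) (f t (u t)) : ℂ)) := by
    filter_upwards [ae_restrict_mem measurableSet_Icc, hae] with t ht htt
    exact hF2 t ht (fun k => w k t) (u t) (htt.comp hφ.tendsto_atTop) (v t)
  exact ⟨fun k => ms (φ k),
    tendsto_integral_of_dominated_convergence bound hFmeas hboundInt hbound hlim⟩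
end
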